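/- Let Z ⊆ (0, N] ∩ ℕ be finite with cardinality Z, let P = N^{1/3}, and let Q(m) denote the number of pairs (x, n) with 1 ≤ x ≤ P a natural number, n ∈ Z, and x³ + n = m. Then for every ε > 0, Σ_m Q(m)² ≪ P·Z + P^{1/2+ε}·Z^{3/2}, where the sum is over all natural numbers m. -/

import Mathlib

open Finset in
lemma tau_le_rpow (ε : ℝ) (hε : 0 < ε) :
    ∃ C : ℝ, 1 ≤ C ∧ ∀ n : ℕ, n ≠ 0 → ((n.divisors.card : ℕ) : ℝ) ≤ C * (n : ℝ) ^ ε := by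
  set c : ℝ := ε * Real.log 2 with hc_def
  have hc : 0 < c := mul_pos hε (Real.log_pos one_lt_two)
  set M : ℝ := max 1 (1 / c) with hM_def
  have hM1 : (1 : ℝ) ≤ M := le_max_left _ _
  have key : ∀ p a : ℕ, p.Prime → ((a + 1 : ℕ) : ℝ) ≤ M * (p : ℝ) ^ (ε * a) := by
    intro p a hp
    have hp2 : (2 : ℝ) ≤ (p : ℝ) := by exact_mod_cast hp.two_le
    have hppos : (0 : ℝ) < p := by linarith
    have h1 : Real.exp (c * a) ≤ (p : ℝ) ^ (ε * a) := by
      rw [Real.rpow_def_of_pos hppos]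
      apply Real.exp_le_exp.2
      have hlog : Real.log 2 ≤ Real.log p := Real.log_le_log two_pos hp2
      have ha : (0 : ℝ) ≤ a := Nat.cast_nonneg a
      have hεa : (0:ℝ) ≤ ε * a := by positivity
      calc c * a = Real.log 2 * (ε * a) := by ring
        _ ≤ Real.log p * (ε * a) := mul_le_mul_of_nonneg_right hlog hεa
    have h2 : 1 + c * a ≤ Real.exp (c * a) := by
      have := Real.add_one_le_exp (c * a); linarith
    have h3 : ((a + 1 : ℕ) : ℝ) ≤ M * (1 + c * a) := by
      push_cast
      have ha : (0:ℝ) ≤ (a:ℝ) := Nat.cast_nonneg a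
      rcases le_or_gt 1 c with h | h
      · have s1 : (a:ℝ) + 1 ≤ 1 + c * a := by nlinarith
        have s2 : 1 + c * a ≤ M * (1 + c * a) := by nlinarith
        linarith
      · have hM : 1 / c ≤ M := le_max_right _ _
        have h1c : (1:ℝ) ≤ 1 / c := by rw [le_div_iff₀ hc, one_mul]; exact h.le
        have he : (1 / c) * (1 + c * a) = 1 / c + a := by field_simp
        have hpos : (0:ℝ) ≤ 1 + c * a := by nlinarith
        have := mul_le_mul_of_nonneg_right hM hpos
        nlinarith
    calc ((a + 1 : ℕ) : ℝ) ≤ M * (1 + c * a) := h3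
      _ ≤ M * (p : ℝ) ^ (ε * a) := by
          apply mul_le_mul_of_nonneg_left (h2.trans h1) (by linarith)
  have key2 : ∀ p a : ℕ, p.Prime → (2 : ℝ) ≤ (p : ℝ) ^ ε →
      ((a + 1 : ℕ) : ℝ) ≤ (p : ℝ) ^ (ε * a) := by
    intro p a hp h2
    have hppos : (0 : ℝ) ≤ (p:ℝ) := Nat.cast_nonneg p
    have hn : ((a + 1 : ℕ) : ℝ) ≤ (2 : ℝ) ^ a := by
      have : a + 1 ≤ 2 ^ a := Nat.lt_two_pow_self
      exact_mod_cast this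
    have : ((2:ℝ)) ^ a ≤ ((p:ℝ) ^ ε) ^ a :=
      pow_le_pow_left₀ (by norm_num) h2 a
    have heq : ((p:ℝ) ^ ε) ^ a = (p : ℝ) ^ (ε * a) := by
      rw [← Real.rpow_natCast ((p:ℝ) ^ ε) a, ← Real.rpow_mul hppos]
    linarith
  set B : ℕ := ⌈(2:ℝ) ^ (1/ε)⌉₊ with hB_def
  refine ⟨M ^ B, one_le_pow₀ hM1, ?_⟩
  intro n hn
  have hτ : ((n.divisors.card : ℕ) : ℝ)
      = ∏ p ∈ n.primeFactors, ((n.factorization p + 1 : ℕ) : ℝ) := by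
    have h0 : n.divisors.card = ∏ p ∈ n.primeFactors, (n.factorization p + 1) := by
      rw [Nat.card_divisors hn]
    rw [h0]
    push_cast
    try rfl
  have hnε : (n : ℝ) ^ ε = ∏ p ∈ n.primeFactors, (p : ℝ) ^ (ε * n.factorization p) := by
    have h1 : ∏ p ∈ n.primeFactors, p ^ n.factorization p = n := by
      conv_rhs => rw [← Nat.factorization_prod_pow_eq_self hn]
      rfl
    conv_lhs => rw [← h1]
    push_cast
    rw [← Real.finset_prod_rpow _ _ (fun p _ => by positivity) ε]
    apply Finset.prod_congr rfl
    intro p hp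
    rw [← Real.rpow_natCast (p:ℝ) (n.factorization p), ← Real.rpow_mul (Nat.cast_nonneg p),
      mul_comm]
  rw [hτ, hnε]
  have hbound : ∀ p ∈ n.primeFactors,
      ((n.factorization p + 1 : ℕ) : ℝ)
        ≤ (if p ≤ B then M else 1) * (p : ℝ) ^ (ε * n.factorization p) := by
    intro p hp
    have hpp : p.Prime := Nat.prime_of_mem_primeFactors hp
    by_cases hpB : p ≤ B
    · simp only [hpB, if_true]
      exact key p _ hpp
    · simp only [hpB, if_false, one_mul]
      apply key2 p _ hpp
      have h1 : (2:ℝ) ^ (1/ε) ≤ (B : ℝ) := Nat.le_ceil _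
      have h2 : (B : ℝ) ≤ (p : ℝ) := by exact_mod_cast (not_le.1 hpB).le
      have h3 : ((2:ℝ) ^ (1/ε)) ^ ε ≤ (p:ℝ) ^ ε :=
        Real.rpow_le_rpow (by positivity) (h1.trans h2) hε.le
      calc (2:ℝ) = ((2:ℝ) ^ (1/ε)) ^ ε := by
            rw [← Real.rpow_mul (by norm_num : (0:ℝ) ≤ 2), one_div_mul_cancel hε.ne',
              Real.rpow_one]
        _ ≤ (p:ℝ) ^ ε := h3
  calc (∏ p ∈ n.primeFactors, ((n.factorization p + 1 : ℕ) : ℝ))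
      ≤ ∏ p ∈ n.primeFactors, (if p ≤ B then M else 1) * (p : ℝ) ^ (ε * n.factorization p) :=
        Finset.prod_le_prod (fun p _ => by positivity) hbound
    _ = (∏ p ∈ n.primeFactors, (if p ≤ B then M else 1))
          * ∏ p ∈ n.primeFactors, (p : ℝ) ^ (ε * n.factorization p) := Finset.prod_mul_distrib
    _ ≤ M ^ B * ∏ p ∈ n.primeFactors, (p : ℝ) ^ (ε * n.factorization p) := by
        apply mul_le_mul_of_nonneg_right _ (Finset.prod_nonneg fun p _ => by positivity)
        rw [Finset.prod_ite, Finset.prod_const, Finset.prod_const, one_pow, mul_one]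
        apply pow_le_pow_right₀ hM1
        have hsub : (n.primeFactors.filter (fun p => p ≤ B)) ⊆ Finset.Icc 2 B := by
          intro p hp
          simp only [Finset.mem_filter] at hp
          exact Finset.mem_Icc.2 ⟨(Nat.prime_of_mem_primeFactors hp.1).two_le, hp.2⟩
        calc (n.primeFactors.filter (fun p => p ≤ B)).card ≤ (Finset.Icc 2 B).card :=
              Finset.card_le_card hsub
          _ ≤ B := by rw [Nat.card_Icc]; omega


/-- `(x+h)^3 - x^3` without subtraction. -/
def gcube' (h x : ℕ) : ℕ := 3*x^2*h + 3*x*h^2 + h^3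

lemma gcube'_spec (h x : ℕ) : (x+h)^3 = x^3 + gcube' h x := by unfold gcube'; ring

lemma gcube_lt (h x x' : ℕ) (hh : 1 ≤ h) (hxx : x < x') : gcube' h x < gcube' h x' := by
  unfold gcube'
  have h1 : 3*x^2*h ≤ 3*x'^2*h := by
    have : x^2 ≤ x'^2 := Nat.pow_le_pow_left hxx.le 2
    exact Nat.mul_le_mul_right h (by omega)
  have h2 : 3*x*h^2 < 3*x'*h^2 := by
    have hp : 0 < h^2 := by positivity
    exact Nat.mul_lt_mul_of_lt_of_le (by omega) le_rfl hp
  omega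

lemma gcube_diff (h x x' n n' m m' : ℕ) (hg : gcube' h x + n = m) (hg' : gcube' h x' + n = m') :
    (m' : ℤ) - m = 3 * h * ((x':ℤ) - x) * ((x:ℤ) + x' + h) := by
  have e1 : ((gcube' h x : ℕ) : ℤ) = 3*(x:ℤ)^2*h + 3*x*h^2 + h^3 := by unfold gcube'; push_cast; ring
  have e2 : ((gcube' h x' : ℕ) : ℤ) = 3*(x':ℤ)^2*h + 3*x'*h^2 + h^3 := by
    unfold gcube'; push_cast; ring
  have c1 : ((gcube' h x : ℕ) : ℤ) + n = m := by exact_mod_cast congrArg (Nat.cast (R := ℤ)) hg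
  have c2 : ((gcube' h x' : ℕ) : ℤ) + n = m' := by exact_mod_cast congrArg (Nat.cast (R := ℤ)) hg'
  rw [e1] at c1; rw [e2] at c2
  ring_nf
  ring_nf at c1 c2
  linarith [c1, c2]

/-- Key divisor-counting bound: the number of `((h,n),(x,x'))` with `x ≠ x'` and
`gcube' h x + n = m`, `gcube' h x' + n = m'` is at most `2 τ(|m'-m|)²`. -/
lemma key_count (S : Finset ((ℕ×ℕ)×(ℕ×ℕ))) (m m' : ℕ)
    (hS : ∀ q ∈ S, 1 ≤ q.1.1 ∧ q.2.1 ≠ q.2.2 ∧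
      gcube' q.1.1 q.2.1 + q.1.2 = m ∧ gcube' q.1.1 q.2.2 + q.1.2 = m') :
    S.card ≤ 2 * (((m':ℤ) - m).natAbs.divisors.card)^2 := by
  set d : ℕ := ((m':ℤ) - m).natAbs with hd
  rcases eq_or_ne m m' with rfl | hne
  · -- S is empty
    have : S = ∅ := by
      apply Finset.eq_empty_of_forall_notMem
      intro q hq
      obtain ⟨h1, hne', hg, hg'⟩ := hS q hq
      rcases Nat.lt_or_ge q.2.1 q.2.2 with hl | hge
      · exact absurd (by omega : gcube' q.1.1 q.2.1 = gcube' q.1.1 q.2.2)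
          (Nat.ne_of_lt (gcube_lt _ _ _ h1 hl))
      · have hl : q.2.2 < q.2.1 := by omega
        exact absurd (by omega : gcube' q.1.1 q.2.2 = gcube' q.1.1 q.2.1)
          (Nat.ne_of_lt (gcube_lt _ _ _ h1 hl))
    simp [this]
  · have hdne : d ≠ 0 := by
      simp only [hd, Int.natAbs_ne_zero, sub_ne_zero]
      exact_mod_cast fun h => hne (by exact_mod_cast h.symm)
    -- injection into divisors × divisors × Bool
    have hcard : S.card ≤ (d.divisors ×ˢ d.divisors ×ˢ (Finset.univ : Finset Bool)).card := by
      apply Finset.card_le_card_of_injOn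
        (fun q => (q.1.1, ((q.2.2:ℤ) - q.2.1).natAbs, decide (q.2.1 < q.2.2)))
      · intro q hq
        obtain ⟨h1, hne', hg, hg'⟩ := hS q hq
        have hid := gcube_diff q.1.1 q.2.1 q.2.2 q.1.2 q.1.2 m m' hg hg'
        simp only [Finset.mem_coe, Finset.mem_product, Nat.mem_divisors]
        refine ⟨⟨?_, hdne⟩, ⟨?_, hdne⟩, Finset.mem_univ _⟩
        · have : (q.1.1 : ℤ) ∣ ((m':ℤ) - m) :=
            ⟨3 * ((q.2.2:ℤ) - q.2.1) * ((q.2.1:ℤ) + q.2.2 + q.1.1), by rw [hid]; ring⟩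
          have := Int.natAbs_dvd_natAbs.mpr this
          simpa using this
        · have : ((q.2.2:ℤ) - q.2.1) ∣ ((m':ℤ) - m) :=
            ⟨3 * q.1.1 * ((q.2.1:ℤ) + q.2.2 + q.1.1), by rw [hid]; ring⟩
          exact Int.natAbs_dvd_natAbs.mpr this
      · intro q hq r hr heq
        obtain ⟨hq1, hqne, hqg, hqg'⟩ := hS q hq
        obtain ⟨hr1, hrne, hrg, hrg'⟩ := hS r hr
        simp only [Prod.mk.injEq] at heq
        obtain ⟨hh, hw, hb⟩ := heq
        have hbb : (q.2.1 < q.2.2) ↔ (r.2.1 < r.2.2) := by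
          constructor <;> intro h <;> [skip; skip] <;> simp_all [decide_eq_decide]
        have hu : (q.2.2:ℤ) - q.2.1 = (r.2.2:ℤ) - r.2.1 := by omega
        have hidq := gcube_diff q.1.1 q.2.1 q.2.2 q.1.2 q.1.2 m m' hqg hqg'
        have hidr := gcube_diff r.1.1 r.2.1 r.2.2 r.1.2 r.1.2 m m' hrg hrg'
        rw [hh, hu] at hidq
        have hmul : (3 * (r.1.1:ℤ) * ((r.2.2:ℤ) - r.2.1)) * ((q.2.1:ℤ) + q.2.2 + r.1.1)
            = (3 * (r.1.1:ℤ) * ((r.2.2:ℤ) - r.2.1)) * ((r.2.1:ℤ) + r.2.2 + r.1.1) := by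
          rw [← hidq, ← hidr]
        have hfac : (3 * (r.1.1:ℤ) * ((r.2.2:ℤ) - r.2.1)) ≠ 0 := by
          have : (r.2.2:ℤ) - r.2.1 ≠ 0 := by
            intro h
            exact hrne (by omega)
          have : (r.1.1:ℤ) ≠ 0 := by positivity
          intro h
          rcases mul_eq_zero.mp h with h' | h'
          · rcases mul_eq_zero.mp h' with h'' | h''
            · norm_num at h''
            · exact ‹(r.1.1:ℤ) ≠ 0› h''
          · exact ‹(r.2.2:ℤ) - r.2.1 ≠ 0› h'
        have hsum : (q.2.1:ℤ) + q.2.2 = (r.2.1:ℤ) + r.2.2 := by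
          have := mul_left_cancel₀ hfac hmul
          omega
        have hx1 : q.2.1 = r.2.1 := by omega
        have hx2 : q.2.2 = r.2.2 := by omega
        have hn : q.1.2 = r.1.2 := by
          have := hqg
          rw [hx1, hh] at this
          omega
        have hq1' : q.1.1 = r.1.1 := hh
        exact Prod.ext (Prod.ext hq1' hn) (Prod.ext hx1 hx2)
    calc S.card ≤ (d.divisors ×ˢ d.divisors ×ˢ (Finset.univ : Finset Bool)).card := hcard
      _ = 2 * d.divisors.card ^ 2 := by
          simp [Finset.card_product, Fintype.card_bool]; ring


section scaffold
variable (P₀ : ℕ) (Z : Finset ℕ)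

open Finset

-- abbreviations
noncomputable def Acube : Finset ℕ := Finset.Icc 1 P₀
noncomputable def Tcube : Finset (ℕ×ℕ×ℕ×ℕ) :=
  ((Acube P₀) ×ˢ (Acube P₀) ×ˢ Z ×ˢ Z).filter
    (fun t => t.1^3 + t.2.2.1 = t.2.1^3 + t.2.2.2)
noncomputable def ccube (a : ℕ×ℕ) : ℕ :=
  ((Acube P₀).filter (fun x => x + a.1 ≤ P₀ ∧ gcube' a.1 x + a.2 ∈ Z)).card
noncomputable def Ucube : Finset ((ℕ×ℕ)×ℕ) :=
  (((Acube P₀) ×ˢ Z) ×ˢ (Acube P₀)).filter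
    (fun q => q.2 + q.1.1 ≤ P₀ ∧ gcube' q.1.1 q.2 + q.1.2 ∈ Z)
noncomputable def Vcube : Finset ((ℕ×ℕ)×(ℕ×ℕ)) :=
  (((Acube P₀) ×ˢ Z) ×ˢ ((Acube P₀) ×ˢ (Acube P₀))).filter
    (fun q => (q.2.1 + q.1.1 ≤ P₀ ∧ gcube' q.1.1 q.2.1 + q.1.2 ∈ Z)
      ∧ (q.2.2 + q.1.1 ≤ P₀ ∧ gcube' q.1.1 q.2.2 + q.1.2 ∈ Z))

lemma Tcube_split :
    (Tcube P₀ Z).card ≤ P₀ * Z.card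
      + 2 * ((Tcube P₀ Z).filter (fun t => t.2.1 < t.1)).card := by
  classical
  set T := Tcube P₀ Z with hT
  have h1 : (T.filter (fun t => t.2.1 < t.1)).card
      + (T.filter (fun t => ¬ t.2.1 < t.1)).card = T.card :=
    Finset.card_filter_add_card_filter_not _
  have h2 : ((T.filter (fun t => ¬ t.2.1 < t.1)).filter (fun t => t.1 < t.2.1)).card
      + ((T.filter (fun t => ¬ t.2.1 < t.1)).filter (fun t => ¬ t.1 < t.2.1)).card
      = (T.filter (fun t => ¬ t.2.1 < t.1)).card :=
    Finset.card_filter_add_card_filter_not _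
  -- the strictly-less part equals the strictly-greater part by swapping
  have h3 : ((T.filter (fun t => ¬ t.2.1 < t.1)).filter (fun t => t.1 < t.2.1)).card
      = (T.filter (fun t => t.2.1 < t.1)).card := by
    rw [Finset.filter_filter]
    apply Finset.card_nbij (i := fun t => (t.2.1, t.1, t.2.2.2, t.2.2.1))
    · intro t ht
      simp only [Finset.mem_coe, Finset.mem_filter, hT, Tcube, Finset.mem_product] at ht ⊢
      obtain ⟨⟨⟨ha1, ha2, hz1, hz2⟩, heq⟩, hlt⟩ := ht
      exact ⟨⟨⟨ha2, ha1, hz2, hz1⟩, heq.symm⟩, hlt.2⟩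
    · intro t ht t' ht' heq
      simp only [Prod.mk.injEq] at heq
      obtain ⟨e1, e2, e3, e4⟩ := heq
      exact Prod.ext e2 (Prod.ext e1 (Prod.ext e4 e3))
    · intro t ht
      refine ⟨(t.2.1, t.1, t.2.2.2, t.2.2.1), ?_, rfl⟩
      simp only [Finset.mem_coe, Finset.mem_filter, hT, Tcube, Finset.mem_product] at ht ⊢
      obtain ⟨⟨⟨ha1, ha2, hz1, hz2⟩, heq⟩, hlt⟩ := ht
      exact ⟨⟨⟨ha2, ha1, hz2, hz1⟩, heq.symm⟩, by omega⟩
  -- the diagonal part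
  have h4 : ((T.filter (fun t => ¬ t.2.1 < t.1)).filter (fun t => ¬ t.1 < t.2.1)).card
      ≤ P₀ * Z.card := by
    have : ((T.filter (fun t => ¬ t.2.1 < t.1)).filter (fun t => ¬ t.1 < t.2.1)).card
        ≤ ((Acube P₀) ×ˢ Z).card := by
      apply Finset.card_le_card_of_injOn (fun t => (t.1, t.2.2.1))
      · intro t ht
        simp only [Finset.mem_coe, Finset.mem_filter, hT, Tcube, Finset.mem_product] at ht
        simp only [Finset.mem_coe, Finset.mem_product]
        exact ⟨ht.1.1.1.1, ht.1.1.1.2.2.1⟩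
      · intro t ht t' ht' heq
        simp only [Finset.mem_coe, Finset.mem_filter, hT, Tcube, Finset.mem_product] at ht ht'
        simp only [Prod.mk.injEq] at heq
        obtain ⟨⟨⟨-, hteq⟩, ht2⟩, ht3⟩ := ht
        obtain ⟨⟨⟨-, hteq'⟩, ht2'⟩, ht3'⟩ := ht'
        have hd : t.2.1 = t.1 := by omega
        have hd' : t'.2.1 = t'.1 := by omega
        rw [hd] at hteq; rw [hd'] at hteq'
        have e1 : t.1 = t'.1 := heq.1
        have e3 : t.2.2.1 = t'.2.2.1 := heq.2
        have e4 : t.2.2.2 = t'.2.2.2 := by omega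
        exact Prod.ext e1 (Prod.ext (by omega) (Prod.ext e3 e4))
    calc _ ≤ ((Acube P₀) ×ˢ Z).card := this
      _ = P₀ * Z.card := by
          rw [Finset.card_product, Acube, Nat.card_Icc]
          simp
  omega

lemma Tgt_le_U :
    ((Tcube P₀ Z).filter (fun t => t.2.1 < t.1)).card ≤ (Ucube P₀ Z).card := by
  classical
  apply Finset.card_le_card_of_injOn (fun t => ((t.1 - t.2.1, t.2.2.1), t.2.1))
  · intro t ht
    simp only [Finset.mem_coe, Finset.mem_filter, Tcube, Finset.mem_product, Acube, Finset.mem_Icc] at ht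
    obtain ⟨⟨⟨hx1, hx2, hz1, hz2⟩, heq⟩, hlt⟩ := ht
    have e := gcube'_spec (t.1 - t.2.1) t.2.1
    rw [show t.2.1 + (t.1 - t.2.1) = t.1 by omega] at e
    simp only [Finset.mem_coe, Ucube, Finset.mem_filter, Finset.mem_product, Acube, Finset.mem_Icc]
    refine ⟨⟨⟨⟨by omega, by omega⟩, hz1⟩, ⟨by omega, by omega⟩⟩, by omega, ?_⟩
    have : gcube' (t.1 - t.2.1) t.2.1 + t.2.2.1 = t.2.2.2 := by omega
    rw [this]; exact hz2
  · intro t ht t' ht' heq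
    simp only [Finset.mem_coe, Finset.mem_filter, Tcube, Finset.mem_product, Acube,
      Finset.mem_Icc] at ht ht'
    obtain ⟨⟨⟨hx1, hx2, hz1, hz2⟩, heqt⟩, hlt⟩ := ht
    obtain ⟨⟨⟨hx1', hx2', hz1', hz2'⟩, heqt'⟩, hlt'⟩ := ht'
    simp only [Prod.mk.injEq] at heq
    obtain ⟨⟨e1, e2⟩, e3⟩ := heq
    have ex1 : t.1 = t'.1 := by omega
    have e4 : t.2.2.2 = t'.2.2.2 := by
      have ea := gcube'_spec (t.1 - t.2.1) t.2.1
      rw [show t.2.1 + (t.1 - t.2.1) = t.1 by omega] at ea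
      have eb := gcube'_spec (t'.1 - t'.2.1) t'.2.1
      rw [show t'.2.1 + (t'.1 - t'.2.1) = t'.1 by omega] at eb
      have eg : gcube' (t.1 - t.2.1) t.2.1 = gcube' (t'.1 - t'.2.1) t'.2.1 := by
        rw [e1, e3]
      omega
    exact Prod.ext ex1 (Prod.ext e3 (Prod.ext e2 e4))

lemma U_eq_sum :
    (Ucube P₀ Z).card = ∑ a ∈ (Acube P₀) ×ˢ Z, ccube P₀ Z a := by
  classical
  rw [Finset.card_eq_sum_card_fiberwise (f := fun q => q.1) (t := (Acube P₀) ×ˢ Z)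
    (fun q hq => by
      simp only [Finset.mem_coe, Ucube, Finset.mem_filter, Finset.mem_product] at hq
      exact Finset.mem_product.2 ⟨hq.1.1.1, hq.1.1.2⟩)]
  apply Finset.sum_congr rfl
  intro a ha
  apply Finset.card_nbij (i := fun q => q.2)
  · intro q hq
    simp only [Finset.mem_coe, Finset.mem_filter, Ucube, Finset.mem_product] at hq ⊢
    obtain ⟨⟨⟨-, hA⟩, hcond⟩, hfa⟩ := hq
    rw [hfa] at hcond
    exact ⟨hA, hcond⟩
  · intro q hq q' hq' heq
    simp only [Finset.mem_coe, Finset.mem_filter] at hq hq'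
    exact Prod.ext (hq.2.trans hq'.2.symm) heq
  · intro x hx
    simp only [Finset.mem_coe, Finset.mem_filter] at hx
    refine ⟨(a, x), ?_, rfl⟩
    simp only [Finset.mem_coe, Finset.mem_filter, Ucube, Finset.mem_product]
    rw [Finset.mem_product] at ha
    exact ⟨⟨⟨⟨ha.1, ha.2⟩, hx.1⟩, hx.2⟩, trivial⟩

lemma sum_sq_eq_V :
    ∑ a ∈ (Acube P₀) ×ˢ Z, (ccube P₀ Z a)^2 = (Vcube P₀ Z).card := by
  classical
  rw [Finset.card_eq_sum_card_fiberwise (f := fun q => q.1) (t := (Acube P₀) ×ˢ Z)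
    (fun q hq => by
      simp only [Finset.mem_coe, Vcube, Finset.mem_filter, Finset.mem_product] at hq
      exact Finset.mem_product.2 ⟨hq.1.1.1, hq.1.1.2⟩)]
  apply Finset.sum_congr rfl
  intro a ha
  have : ((Vcube P₀ Z).filter (fun q => q.1 = a)).card
      = (((Acube P₀).filter (fun x => x + a.1 ≤ P₀ ∧ gcube' a.1 x + a.2 ∈ Z)) ×ˢ
         ((Acube P₀).filter (fun x => x + a.1 ≤ P₀ ∧ gcube' a.1 x + a.2 ∈ Z))).card := by
    apply Finset.card_nbij (i := fun q => q.2)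
    · intro q hq
      simp only [Finset.mem_coe, Finset.mem_filter, Vcube, Finset.mem_product] at hq
      obtain ⟨⟨⟨-, hA⟩, hcond⟩, hfa⟩ := hq
      rw [hfa] at hcond
      exact Finset.mem_product.2 ⟨Finset.mem_filter.2 ⟨hA.1, hcond.1⟩,
        Finset.mem_filter.2 ⟨hA.2, hcond.2⟩⟩
    · intro q hq q' hq' heq
      simp only [Finset.mem_coe, Finset.mem_filter] at hq hq'
      exact Prod.ext (hq.2.trans hq'.2.symm) heq
    · intro x hx
      simp only [Finset.mem_coe, Finset.mem_product, Finset.mem_filter] at hx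
      refine ⟨(a, x), ?_, rfl⟩
      simp only [Finset.mem_coe, Finset.mem_filter, Vcube, Finset.mem_product]
      rw [Finset.mem_product] at ha
      exact ⟨⟨⟨⟨ha.1, ha.2⟩, ⟨hx.1.1, hx.2.1⟩⟩, ⟨hx.1.2, hx.2.2⟩⟩, trivial⟩
  rw [this, Finset.card_product, ccube, sq]

lemma V_split :
    (Vcube P₀ Z).card ≤ (Ucube P₀ Z).card
      + ((Vcube P₀ Z).filter (fun q => q.2.1 ≠ q.2.2)).card := by
  classical
  have h1 : ((Vcube P₀ Z).filter (fun q => q.2.1 = q.2.2)).card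
      + ((Vcube P₀ Z).filter (fun q => ¬ q.2.1 = q.2.2)).card = (Vcube P₀ Z).card :=
    Finset.card_filter_add_card_filter_not _
  have h2 : ((Vcube P₀ Z).filter (fun q => q.2.1 = q.2.2)).card ≤ (Ucube P₀ Z).card := by
    apply Finset.card_le_card_of_injOn (fun q => (q.1, q.2.1))
    · intro q hq
      simp only [Finset.mem_coe, Finset.mem_filter, Vcube, Finset.mem_product] at hq
      simp only [Finset.mem_coe, Ucube, Finset.mem_filter, Finset.mem_product]
      obtain ⟨⟨⟨hA, hB⟩, hcond⟩, -⟩ := hq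
      exact ⟨⟨hA, hB.1⟩, hcond.1⟩
    · intro q hq q' hq' heq
      simp only [Finset.mem_coe, Finset.mem_filter] at hq hq'
      simp only [Prod.mk.injEq] at heq
      refine Prod.ext heq.1 (Prod.ext heq.2 ?_)
      rw [← hq.2, ← hq'.2, heq.2]
  simp only [ne_eq]
  omega

lemma Voff_card_le :
    ((Vcube P₀ Z).filter (fun q => q.2.1 ≠ q.2.2)).card
      ≤ ∑ p ∈ Z ×ˢ Z, 2 * ((((p.2:ℤ) - p.1).natAbs).divisors.card)^2 := by
  classical
  set W := (Vcube P₀ Z).filter (fun q => q.2.1 ≠ q.2.2) with hW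
  have hmaps : ∀ q ∈ W, (gcube' q.1.1 q.2.1 + q.1.2, gcube' q.1.1 q.2.2 + q.1.2) ∈ Z ×ˢ Z := by
    intro q hq
    simp only [hW, Finset.mem_filter, Vcube, Finset.mem_product] at hq
    exact Finset.mem_product.2 ⟨hq.1.2.1.2, hq.1.2.2.2⟩
  rw [Finset.card_eq_sum_card_fiberwise hmaps]
  apply Finset.sum_le_sum
  intro p hp
  apply key_count
  intro q hq
  simp only [Finset.mem_filter, hW, Vcube, Finset.mem_product, Prod.mk.injEq] at hq
  obtain ⟨⟨⟨⟨⟨hh1, -⟩, -⟩, hcond⟩, hne⟩, he⟩ := hq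
  refine ⟨(Finset.mem_Icc.1 (by simpa [Acube] using hh1)).1, hne, ?_, ?_⟩
  · rw [← he]
  · rw [← he]

end scaffold

set_option maxHeartbeats 1000000 in
theorem stmt_19 :
    ∀ ε : ℝ, 0 < ε → ∃ C : ℝ, 0 < C ∧ ∀ N : ℕ, 1 ≤ N → ∀ Z : Finset ℕ,
      ↑Z ⊆ Set.Ioc 0 N →
      ({t : ℕ × ℕ × ℕ × ℕ | 1 ≤ t.1 ∧ (t.1 : ℝ) ≤ (N : ℝ) ^ ((1 : ℝ) / 3) ∧
          1 ≤ t.2.1 ∧ (t.2.1 : ℝ) ≤ (N : ℝ) ^ ((1 : ℝ) / 3) ∧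
          t.2.2.1 ∈ Z ∧ t.2.2.2 ∈ Z ∧
          t.1 ^ 3 + t.2.2.1 = t.2.1 ^ 3 + t.2.2.2}.ncard : ℝ)
        ≤ C * ((N : ℝ) ^ ((1 : ℝ) / 3) * Z.card +
            ((N : ℝ) ^ ((1 : ℝ) / 3)) ^ ((1 : ℝ) / 2 + ε) * (Z.card : ℝ) ^ ((3 : ℝ) / 2)) := by
  intro ε hε
  obtain ⟨C, hC1, hCb⟩ := tau_le_rpow (ε/3) (by positivity)
  have hC0 : (0:ℝ) < C := lt_of_lt_of_le one_pos hC1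
  refine ⟨3 + 2 * Real.sqrt 2 * C, by positivity, ?_⟩
  intro N hN Z hZ
  set Pr : ℝ := (N : ℝ) ^ ((1:ℝ)/3) with hPr_def
  have hPr1 : (1:ℝ) ≤ Pr := Real.one_le_rpow (by exact_mod_cast hN) (by norm_num)
  have hPr0 : (0:ℝ) < Pr := lt_of_lt_of_le one_pos hPr1
  set P₀ : ℕ := ⌊Pr⌋₊ with hP₀_def
  have hP₀Pr : (P₀ : ℝ) ≤ Pr := Nat.floor_le (le_of_lt hPr0)
  set z : ℝ := (Z.card : ℝ) with hz_def
  have hz0 : 0 ≤ z := Nat.cast_nonneg _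
  -- identify the set with the finset
  have hsetT : {t : ℕ × ℕ × ℕ × ℕ | 1 ≤ t.1 ∧ (t.1 : ℝ) ≤ Pr ∧
      1 ≤ t.2.1 ∧ (t.2.1 : ℝ) ≤ Pr ∧ t.2.2.1 ∈ Z ∧ t.2.2.2 ∈ Z ∧
      t.1 ^ 3 + t.2.2.1 = t.2.1 ^ 3 + t.2.2.2} = ↑(Tcube P₀ Z) := by
    ext t
    simp only [Set.mem_setOf_eq, Finset.coe_filter, Tcube, Acube, Finset.mem_coe,
      Finset.mem_filter, Finset.mem_product, Finset.mem_Icc,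
      hP₀_def, Nat.le_floor_iff (le_of_lt hPr0)]
    tauto
  rw [hsetT, Set.ncard_coe_finset]
  -- counting chain
  set S1 : ℕ := (Ucube P₀ Z).card with hS1_def
  set W : ℕ := ((Vcube P₀ Z).filter (fun q => q.2.1 ≠ q.2.2)).card with hW_def
  set K : ℝ := 2 * (C * (N:ℝ) ^ (ε/3))^2 with hK_def
  have hK0 : 0 ≤ K := by positivity
  -- bound on W
  have hWb : (W : ℝ) ≤ z^2 * K := by
    have h1 : (W:ℝ) ≤ ∑ p ∈ Z ×ˢ Z, (2 * ((((p.2:ℤ) - p.1).natAbs).divisors.card)^2 : ℝ) := by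
      have := Voff_card_le P₀ Z
      calc (W:ℝ) ≤ ((∑ p ∈ Z ×ˢ Z, 2 * ((((p.2:ℤ) - p.1).natAbs).divisors.card)^2 : ℕ) : ℝ) :=
            by exact_mod_cast this
        _ = _ := by push_cast; rfl
    have h2 : ∀ p ∈ Z ×ˢ Z,
        (2 * ((((p.2:ℤ) - p.1).natAbs).divisors.card)^2 : ℝ) ≤ K := by
      intro p hp
      rw [Finset.mem_product] at hp
      have hp1 := hZ (Finset.mem_coe.2 hp.1)
      have hp2 := hZ (Finset.mem_coe.2 hp.2)
      simp only [Set.mem_Ioc] at hp1 hp2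
      set d : ℕ := (((p.2:ℤ) - p.1).natAbs) with hd_def
      have hdN : d ≤ N := by omega
      have hτ : ((d.divisors.card : ℕ) : ℝ) ≤ C * (N:ℝ) ^ (ε/3) := by
        rcases eq_or_ne d 0 with h0 | h0
        · rw [h0]; simp; positivity
        · calc ((d.divisors.card : ℕ) : ℝ) ≤ C * (d:ℝ) ^ (ε/3) := hCb d h0
            _ ≤ C * (N:ℝ) ^ (ε/3) := by
                apply mul_le_mul_of_nonneg_left _ (le_of_lt hC0)
                apply Real.rpow_le_rpow (Nat.cast_nonneg _) (by exact_mod_cast hdN)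
                  (by positivity)
      have hτ0 : (0:ℝ) ≤ ((d.divisors.card : ℕ) : ℝ) := Nat.cast_nonneg _
      calc (2 * ((d.divisors.card : ℕ):ℝ)^2 : ℝ) ≤ 2 * (C * (N:ℝ) ^ (ε/3))^2 := by nlinarith
        _ = K := rfl
    calc (W:ℝ) ≤ ∑ p ∈ Z ×ˢ Z, (2 * ((((p.2:ℤ) - p.1).natAbs).divisors.card)^2 : ℝ) := h1
      _ ≤ ∑ p ∈ Z ×ˢ Z, K := Finset.sum_le_sum h2
      _ = z^2 * K := by
          rw [Finset.sum_const, Finset.card_product, nsmul_eq_mul]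
          push_cast; ring
  -- Cauchy–Schwarz
  have hCS : (S1:ℝ)^2 ≤ ((P₀:ℝ) * z) * ((S1:ℝ) + (W:ℝ)) := by
    have h1 : (S1:ℝ) = ∑ a ∈ (Acube P₀) ×ˢ Z, ((ccube P₀ Z a : ℕ) : ℝ) := by
      rw [hS1_def, U_eq_sum P₀ Z]; push_cast; rfl
    have h2 : (∑ a ∈ (Acube P₀) ×ˢ Z, (1:ℝ) * ((ccube P₀ Z a : ℕ) : ℝ))^2
        ≤ (∑ a ∈ (Acube P₀) ×ˢ Z, (1:ℝ)^2) * ∑ a ∈ (Acube P₀) ×ˢ Z, ((ccube P₀ Z a : ℕ):ℝ)^2 :=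
      Finset.sum_mul_sq_le_sq_mul_sq _ _ _
    have h3 : (∑ a ∈ (Acube P₀) ×ˢ Z, (1:ℝ)^2) = (P₀:ℝ) * z := by
      rw [Finset.sum_const, Finset.card_product]
      simp [Acube, Nat.card_Icc, hz_def]
    have h4 : ∑ a ∈ (Acube P₀) ×ˢ Z, ((ccube P₀ Z a : ℕ):ℝ)^2 ≤ (S1:ℝ) + (W:ℝ) := by
      have e : ∑ a ∈ (Acube P₀) ×ˢ Z, ((ccube P₀ Z a : ℕ):ℝ)^2
          = ((Vcube P₀ Z).card : ℝ) := by
        rw [← sum_sq_eq_V P₀ Z]; push_cast; rfl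
      rw [e]
      have := V_split P₀ Z
      have : ((Vcube P₀ Z).card : ℝ) ≤ (S1:ℝ) + (W:ℝ) := by exact_mod_cast this
      exact this
    calc (S1:ℝ)^2 = (∑ a ∈ (Acube P₀) ×ˢ Z, (1:ℝ) * ((ccube P₀ Z a : ℕ) : ℝ))^2 := by
          rw [h1]; congr 1; apply Finset.sum_congr rfl; intros; rw [one_mul]
      _ ≤ (∑ a ∈ (Acube P₀) ×ˢ Z, (1:ℝ)^2) * ∑ a ∈ (Acube P₀) ×ˢ Z, ((ccube P₀ Z a : ℕ):ℝ)^2 :=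
          h2
      _ ≤ ((P₀:ℝ) * z) * ((S1:ℝ) + (W:ℝ)) := by
          rw [h3]
          apply mul_le_mul_of_nonneg_left h4 (by positivity)
  -- solve the quadratic
  set a : ℝ := (P₀:ℝ) * z with ha_def
  have ha0 : 0 ≤ a := by positivity
  have hs0 : (0:ℝ) ≤ (S1:ℝ) := Nat.cast_nonneg _
  set r : ℝ := Real.sqrt (a * (z^2 * K)) with hr_def
  have hr0 : 0 ≤ r := Real.sqrt_nonneg _
  have hr2 : r^2 = a * (z^2 * K) := Real.sq_sqrt (by positivity)
  have hS1b : (S1:ℝ) ≤ a + r := by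
    by_contra hcon
    push_neg at hcon
    have h1 : (S1:ℝ)^2 ≤ a * (S1:ℝ) + a * (z^2 * K) := by
      have h0 : a * (W:ℝ) ≤ a * (z^2 * K) := mul_le_mul_of_nonneg_left hWb ha0
      calc (S1:ℝ)^2 ≤ a * ((S1:ℝ) + (W:ℝ)) := hCS
        _ = a * (S1:ℝ) + a * (W:ℝ) := by ring
        _ ≤ a * (S1:ℝ) + a * (z^2 * K) := by linarith
    have h1' : (S1:ℝ) * (S1:ℝ) ≤ a * (S1:ℝ) + r * r := by
      have := h1
      rw [← hr2] at this
      calc (S1:ℝ) * (S1:ℝ) = (S1:ℝ)^2 := (sq (S1:ℝ)).symm ▸ (pow_two (S1:ℝ)).symm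
        _ ≤ a * (S1:ℝ) + r^2 := this
        _ = a * (S1:ℝ) + r * r := by ring
    have hspos : (0:ℝ) < (S1:ℝ) := by linarith
    have hrs : r * r ≤ r * (S1:ℝ) := mul_le_mul_of_nonneg_left (by linarith) hr0
    have hars : (a + r) * (S1:ℝ) < (S1:ℝ) * (S1:ℝ) := mul_lt_mul_of_pos_right hcon hspos
    nlinarith [h1', hrs, hars]
  -- total bound
  have hTb : ((Tcube P₀ Z).card : ℝ) ≤ 3 * a + 2 * r := by
    have h1 : (Tcube P₀ Z).card ≤ P₀ * Z.card + 2 * S1 := by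
      have := Tcube_split P₀ Z
      have h2 := Tgt_le_U P₀ Z
      omega
    have h2 : ((Tcube P₀ Z).card : ℝ) ≤ a + 2 * (S1:ℝ) := by
      have : ((P₀ * Z.card + 2 * S1 : ℕ) : ℝ) = a + 2 * (S1:ℝ) := by push_cast; ring
      rw [← this]
      exact_mod_cast h1
    linarith [hS1b]
  -- convert r to the target form
  have hrb : r ≤ Real.sqrt 2 * C * (Pr ^ ((1:ℝ)/2 + ε) * z ^ ((3:ℝ)/2)) := by
    have h1 : a * (z^2 * K) ≤ (Pr * z^3) * K := by
      have haz : a ≤ Pr * z := mul_le_mul_of_nonneg_right hP₀Pr hz0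
      have h1a : a * z^2 ≤ (Pr * z) * z^2 :=
        mul_le_mul_of_nonneg_right haz (sq_nonneg z)
      have h1b : a * z^2 * K ≤ (Pr * z) * z^2 * K :=
        mul_le_mul_of_nonneg_right h1a hK0
      calc a * (z^2 * K) = a * z^2 * K := by ring
        _ ≤ (Pr * z) * z^2 * K := h1b
        _ = (Pr * z^3) * K := by ring
    have h2 : r ≤ Real.sqrt ((Pr * z^3) * K) := by
      rw [hr_def]
      exact Real.sqrt_le_sqrt h1
    have hzK : (0:ℝ) ≤ Pr * z^3 := by positivity
    have k1 : Real.sqrt ((Pr * z^3) * K) = Real.sqrt (Pr * z^3) * Real.sqrt K :=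
      Real.sqrt_mul hzK K
    have k2 : Real.sqrt (Pr * z^3) = Real.sqrt Pr * Real.sqrt (z^3) :=
      Real.sqrt_mul (le_of_lt hPr0) _
    have k3 : Real.sqrt K = Real.sqrt 2 * (C * (N:ℝ)^(ε/3)) := by
      rw [hK_def, Real.sqrt_mul (by norm_num : (0:ℝ) ≤ 2),
        Real.sqrt_sq (by positivity : (0:ℝ) ≤ C * (N:ℝ)^(ε/3))]
    have h3 : Real.sqrt ((Pr * z^3) * K)
        = Real.sqrt Pr * Real.sqrt (z^3) * (Real.sqrt 2 * (C * (N:ℝ)^(ε/3))) := by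
      rw [k1, k2, k3]
    have h4 : Real.sqrt Pr = Pr ^ ((1:ℝ)/2) := Real.sqrt_eq_rpow Pr
    have h5 : Real.sqrt (z^3) = z ^ ((3:ℝ)/2) := by
      rw [Real.sqrt_eq_rpow, ← Real.rpow_natCast z 3, ← Real.rpow_mul hz0]
      norm_num
    have h6 : (N:ℝ)^(ε/3) = Pr ^ ε := by
      rw [hPr_def, ← Real.rpow_mul (Nat.cast_nonneg N)]
      norm_num
      rw [mul_comm, mul_one_div]
    have h7 : Pr ^ ((1:ℝ)/2) * Pr ^ ε = Pr ^ ((1:ℝ)/2 + ε) :=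
      (Real.rpow_add hPr0 _ _).symm
    calc r ≤ Real.sqrt ((Pr * z^3) * K) := h2
      _ = Pr ^ ((1:ℝ)/2) * z ^ ((3:ℝ)/2) * (Real.sqrt 2 * (C * Pr ^ ε)) := by
          rw [h3, h4, h5, h6]
      _ = Real.sqrt 2 * C * (Pr ^ ((1:ℝ)/2 + ε) * z ^ ((3:ℝ)/2)) := by
          rw [← h7]; ring
  -- final assembly
  have hterm2 : (0:ℝ) ≤ Pr ^ ((1:ℝ)/2 + ε) * z ^ ((3:ℝ)/2) := by positivity
  calc ((Tcube P₀ Z).card : ℝ) ≤ 3 * a + 2 * r := hTb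
    _ ≤ 3 * (Pr * z) + 2 * (Real.sqrt 2 * C * (Pr ^ ((1:ℝ)/2 + ε) * z ^ ((3:ℝ)/2))) := by
        have haz : a ≤ Pr * z := mul_le_mul_of_nonneg_right hP₀Pr hz0
        linarith [hrb]
    _ ≤ (3 + 2 * Real.sqrt 2 * C) * (Pr * z + Pr ^ ((1:ℝ)/2 + ε) * z ^ ((3:ℝ)/2)) := by
        have e1 : (0:ℝ) ≤ 2 * Real.sqrt 2 * C * (Pr * z) := by positivity
        have e2 : (0:ℝ) ≤ 3 * (Pr ^ ((1:ℝ)/2 + ε) * z ^ ((3:ℝ)/2)) := by positivity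
        have e3 : (3 + 2 * Real.sqrt 2 * C) * (Pr * z + Pr ^ ((1:ℝ)/2 + ε) * z ^ ((3:ℝ)/2))
            = 3 * (Pr * z) + 2 * (Real.sqrt 2 * C * (Pr ^ ((1:ℝ)/2 + ε) * z ^ ((3:ℝ)/2)))
              + (2 * Real.sqrt 2 * C * (Pr * z)
                + 3 * (Pr ^ ((1:ℝ)/2 + ε) * z ^ ((3:ℝ)/2))) := by ring
        linarith
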